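/- arXiv:1703.05464 — 2 statements merged into one kernel-verified Lean document; each statement's English description precedes it below -/
import Mathlib

section
/- Suppose n ≥ 1 and there are positive integers a_1, …, a_n such that w_p^i = a_i for every p ∈ F and every 1 ≤ i ≤ n. If the signature series S is a constant power series, then the number of p ∈ F with ε(p) = +1 equals the number of p ∈ F with ε(p) = −1, and consequently S = 0. -/
open PowerSeries

/-- The local factor `(1 + t^w) · (1 - t^w)⁻¹` of the Atiyah–Singer signature
formula, as a formal power series with integer coefficients.  For `0 < w` the
series `1 - t^w` has constant coefficient `1`, hence is a unit, and
`Ring.inverse` is its genuine multiplicative inverse. -/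
noncomputable def sigFactor (w : ℕ) : PowerSeries ℤ :=
  (1 + (X : PowerSeries ℤ) ^ w) * Ring.inverse (1 - (X : PowerSeries ℤ) ^ w)

/-- The signature series `S = Σ_{p ∈ F} ε(p) · Π_{i=1}^n (1 + t^{w_p^i}) (1 - t^{w_p^i})⁻¹`
attached to a finite index set `F`, a sign function `ε`, and weights `w`. -/
noncomputable def sigSeries {F : Type} [Fintype F] {n : ℕ}
    (ε : F → ℤ) (w : F → Fin n → ℕ) : PowerSeries ℤ :=
  ∑ p : F, ε p • ∏ i : Fin n, sigFactor (w p i)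

noncomputable def geo (w : ℕ) : PowerSeries ℤ :=
  PowerSeries.mk fun m => if w ∣ m then 1 else 0

lemma geo_coeff (w m : ℕ) : coeff m (geo w) = if w ∣ m then 1 else 0 :=
  coeff_mk _ _

lemma geo_mul (w : ℕ) (hw : 0 < w) : (1 - (X : PowerSeries ℤ) ^ w) * geo w = 1 := by
  ext m
  rw [sub_mul, one_mul, map_sub, coeff_X_pow_mul', PowerSeries.coeff_one, geo_coeff]
  by_cases h : w ≤ m
  · rw [if_pos h, geo_coeff]
    have hiff : w ∣ m ↔ w ∣ m - w := by
      constructor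
      · intro hd; exact Nat.dvd_sub hd dvd_rfl
      · intro hd; have := Nat.dvd_add hd (dvd_refl w); rwa [Nat.sub_add_cancel h] at this
    have hm : m ≠ 0 := by omega
    rw [if_neg hm]
    by_cases hd : w ∣ m
    · rw [if_pos hd, if_pos (hiff.mp hd)]; ring
    · rw [if_neg hd, if_neg (fun h' => hd (hiff.mpr h'))]; ring
  · rw [if_neg h]
    by_cases hm : m = 0
    · subst hm; simp
    · rw [if_neg hm, if_neg (fun hd => h (Nat.le_of_dvd (Nat.pos_of_ne_zero hm) hd))]; ring

lemma sigFactor_eq (w : ℕ) (hw : 0 < w) :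
    sigFactor w = (1 + (X : PowerSeries ℤ) ^ w) * geo w := by
  unfold sigFactor
  congr 1
  have h := geo_mul w hw
  have hu : IsUnit (1 - (X : PowerSeries ℤ) ^ w) := IsUnit.of_mul_eq_one _ h
  calc Ring.inverse (1 - (X : PowerSeries ℤ) ^ w)
      = Ring.inverse (1 - (X : PowerSeries ℤ) ^ w) * ((1 - (X : PowerSeries ℤ) ^ w) * geo w) := by
        rw [h, mul_one]
    _ = geo w := Ring.inverse_mul_cancel_left _ _ hu

lemma sigFactor_coeff (w m : ℕ) (hw : 0 < w) :
    coeff m (sigFactor w) =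
      (if w ∣ m then 1 else 0) + (if w ≤ m then (if w ∣ m - w then 1 else 0) else 0) := by
  rw [sigFactor_eq w hw, add_mul, one_mul, map_add, coeff_X_pow_mul', geo_coeff]
  by_cases h : w ≤ m
  · rw [if_pos h, if_pos h, geo_coeff]
  · rw [if_neg h, if_neg h]

lemma sigFactor_nonneg (w : ℕ) (hw : 0 < w) (m : ℕ) : 0 ≤ coeff m (sigFactor w) := by
  rw [sigFactor_coeff w m hw]
  have h1 : (0:ℤ) ≤ if w ∣ m then 1 else 0 := by split <;> norm_num
  have h2 : (0:ℤ) ≤ if w ≤ m then (if w ∣ m - w then (1:ℤ) else 0) else 0 := by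
    split
    · split <;> norm_num
    · exact le_refl 0
  exact add_nonneg h1 h2

lemma sigFactor_coeff_zero (w : ℕ) (hw : 0 < w) : constantCoeff (sigFactor w) = 1 := by
  rw [← coeff_zero_eq_constantCoeff, sigFactor_coeff w 0 hw]
  rw [if_pos (dvd_zero w), if_neg (by omega)]; norm_num

lemma sigFactor_coeff_w (w : ℕ) (hw : 0 < w) : coeff w (sigFactor w) = 2 := by
  rw [sigFactor_coeff w w hw, if_pos dvd_rfl, if_pos le_rfl, Nat.sub_self,
    if_pos (dvd_zero w)]
  norm_num

lemma mul_coeff_nonneg (f g : PowerSeries ℤ) (hf : ∀ m, 0 ≤ coeff m f)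
    (hg : ∀ m, 0 ≤ coeff m g) (m : ℕ) : 0 ≤ coeff m (f * g) := by
  rw [coeff_mul]
  exact Finset.sum_nonneg fun p _ => mul_nonneg (hf p.1) (hg p.2)

lemma prod_nonneg_coeff {ι : Type*} (s : Finset ι) (f : ι → PowerSeries ℤ)
    (h : ∀ i ∈ s, ∀ m, 0 ≤ coeff m (f i)) (m : ℕ) :
    0 ≤ coeff m (∏ i ∈ s, f i) :=
  Finset.prod_induction f (fun g => ∀ m, 0 ≤ coeff m g)
    (fun x y hx hy => mul_coeff_nonneg x y hx hy)
    (fun m => by rw [PowerSeries.coeff_one]; split <;> norm_num) h m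

lemma coeff_mul_ge (f g : PowerSeries ℤ) (hf : ∀ m, 0 ≤ coeff m f)
    (hg : ∀ m, 0 ≤ coeff m g) (hg0 : coeff 0 g = 1) (m : ℕ) :
    coeff m f ≤ coeff m (f * g) := by
  rw [coeff_mul]
  have hmem : (m, 0) ∈ Finset.HasAntidiagonal.antidiagonal m := by simp
  have := Finset.single_le_sum (f := fun p : ℕ × ℕ => coeff p.1 f * coeff p.2 g)
    (fun p _ => mul_nonneg (hf p.1) (hg p.2)) hmem
  simpa [hg0] using this

theorem stmt8 {F : Type} [Fintype F] {n : ℕ} (hn : 1 ≤ n) (ε : F → ℤ)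
    (hε : ∀ p, ε p = 1 ∨ ε p = -1) (w : F → Fin n → ℕ)
    (a : Fin n → ℕ) (ha : ∀ i, 0 < a i) (hw : ∀ p i, w p i = a i)
    (hconst : ∃ C : ℤ, sigSeries ε w = PowerSeries.C C) :
    (Finset.univ.filter fun p => ε p = 1).card =
      (Finset.univ.filter fun p => ε p = -1).card ∧
    sigSeries ε w = 0 := by
  classical
  obtain ⟨C, hC⟩ := hconst
  set i0 : Fin n := ⟨0, hn⟩ with hi0
  set P : PowerSeries ℤ := ∏ i : Fin n, sigFactor (a i) with hPdef
  have hprodeq : ∀ p : F, ∏ i : Fin n, sigFactor (w p i) = P := fun p =>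
    Finset.prod_congr rfl (fun i _ => by rw [hw p i])
  have hS : sigSeries ε w = (∑ p : F, ε p) • P := by
    unfold sigSeries
    rw [Finset.sum_congr rfl (fun p _ => by rw [hprodeq p]), ← Finset.sum_smul]
  have hQnn : ∀ (s : Finset (Fin n)) m, 0 ≤ coeff m (∏ i ∈ s, sigFactor (a i)) :=
    fun s m => prod_nonneg_coeff s _ (fun i _ m => sigFactor_nonneg (a i) (ha i) m) m
  set Q := ∏ i ∈ Finset.univ.erase i0, sigFactor (a i) with hQdef
  have hsplit : P = sigFactor (a i0) * Q :=
    (Finset.mul_prod_erase _ _ (Finset.mem_univ i0)).symm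
  have hQ0 : coeff 0 Q = 1 := by
    rw [hQdef, coeff_zero_eq_constantCoeff, map_prod]
    exact Finset.prod_eq_one fun i _ => sigFactor_coeff_zero (a i) (ha i)
  have hkey : 2 ≤ coeff (a i0) P := by
    rw [hsplit]
    have := coeff_mul_ge (sigFactor (a i0)) Q (sigFactor_nonneg _ (ha i0)) (hQdef ▸ hQnn _) hQ0 (a i0)
    rwa [sigFactor_coeff_w _ (ha i0)] at this
  have hsum : (∑ p : F, ε p) = 0 := by
    have h1 : coeff (a i0) (sigSeries ε w) = 0 := by
      rw [hC, coeff_C, if_neg (ha i0).ne']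
    rw [hS, map_zsmul, smul_eq_mul] at h1
    rcases mul_eq_zero.mp h1 with h | h
    · exact h
    · rw [h] at hkey; norm_num at hkey
  have hfilt : Finset.univ.filter (fun p => ¬ ε p = 1) = Finset.univ.filter (fun p => ε p = -1) := by
    apply Finset.filter_congr
    intro p _
    rcases hε p with h | h <;> simp [h]
  have e1 : ∑ p ∈ Finset.univ.filter (fun p => ε p = 1), ε p
      = ((Finset.univ.filter fun p => ε p = 1).card : ℤ) := by
    rw [Finset.sum_congr rfl (fun p hp => (Finset.mem_filter.mp hp).2)]
    simp
  have e2 : ∑ p ∈ Finset.univ.filter (fun p => ε p = -1), ε p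
      = -((Finset.univ.filter fun p => ε p = -1).card : ℤ) := by
    rw [Finset.sum_congr rfl (fun p hp => (Finset.mem_filter.mp hp).2)]
    simp
  have hsum' := hsum
  rw [← Finset.sum_filter_add_sum_filter_not Finset.univ (fun p => ε p = 1) ε, hfilt, e1, e2] at hsum'
  constructor
  · omega
  · rw [hS, hsum, zero_smul]
end

section
/- Let w be a positive integer and let w_1, …, w_n be positive integers with w ≤ w_i for all 1 ≤ i ≤ n. Then in ℤ⟦t⟧ the coefficient of t^w in the product Π_{i=1}^n (1 + t^{w_i}) · (1 − t^{w_i})⁻¹ equals 2 · #{i : w_i = w}. -/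
open PowerSeries

lemma isUnit_one_sub_X_pow (m : ℕ) (hm : 0 < m) :
    IsUnit (1 - (X : PowerSeries ℤ) ^ m) := by
  rw [PowerSeries.isUnit_iff_constantCoeff]
  simp [constantCoeff_X, hm.ne', zero_pow hm.ne']

lemma one_sub_mul_sigFactor (m : ℕ) (hm : 0 < m) :
    (1 - (X : PowerSeries ℤ) ^ m) * sigFactor m = 1 + (X : PowerSeries ℤ) ^ m := by
  rw [sigFactor, mul_left_comm, Ring.mul_inverse_cancel _ (isUnit_one_sub_X_pow m hm), mul_one]

lemma coeff_sigFactor (m k : ℕ) (hm : 0 < m) :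
    PowerSeries.coeff k (sigFactor m) =
      PowerSeries.coeff k (1 + (X : PowerSeries ℤ) ^ m) +
        (if m ≤ k then PowerSeries.coeff (k - m) (sigFactor m) else 0) := by
  have h := congrArg (PowerSeries.coeff k) (one_sub_mul_sigFactor m hm)
  rw [sub_mul, one_mul, map_sub, coeff_X_pow_mul'] at h
  linarith

lemma coeff_zero_sigFactor (m : ℕ) (hm : 0 < m) :
    PowerSeries.coeff 0 (sigFactor m) = 1 := by
  rw [coeff_sigFactor m 0 hm, if_neg (by omega)]
  simp [coeff_X_pow, hm.ne']

lemma coeff_lt_sigFactor (m k : ℕ) (hk0 : 0 < k) (hkm : k < m) :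
    PowerSeries.coeff k (sigFactor m) = 0 := by
  rw [coeff_sigFactor m k (hk0.trans hkm), if_neg (by omega)]
  simp [coeff_X_pow, hk0.ne', hkm.ne, PowerSeries.coeff_one]

lemma coeff_self_sigFactor (m : ℕ) (hm : 0 < m) :
    PowerSeries.coeff m (sigFactor m) = 2 := by
  rw [coeff_sigFactor m m hm, if_pos le_rfl, Nat.sub_self, coeff_zero_sigFactor m hm]
  simp [coeff_X_pow, PowerSeries.coeff_one, hm.ne']

/-- coefficient of a product when the first factor has no coefficients in `(0, w)`. -/
lemma coeff_mul_split (A B : PowerSeries ℤ) (w : ℕ) (hw : 0 < w)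
    (hA : ∀ k, 0 < k → k < w → PowerSeries.coeff k A = 0) :
    PowerSeries.coeff w (A * B) =
      PowerSeries.coeff 0 A * PowerSeries.coeff w B +
        PowerSeries.coeff w A * PowerSeries.coeff 0 B := by
  rw [PowerSeries.coeff_mul, Finset.Nat.sum_antidiagonal_eq_sum_range_succ_mk,
    Finset.sum_range_succ, Nat.sub_self]
  congr 1
  rw [Finset.sum_eq_single 0]
  · simp
  · intro j hj hj0
    rw [hA j (Nat.pos_of_ne_zero hj0) (Finset.mem_range.mp hj), zero_mul]
  · simp [hw]

theorem stmt11 (w : ℕ) (hw : 0 < w) {n : ℕ} (wi : Fin n → ℕ)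
    (hpos : ∀ i, 0 < wi i) (hle : ∀ i, w ≤ wi i) :
    PowerSeries.coeff w (∏ i : Fin n, sigFactor (wi i)) =
      2 * ((Finset.univ.filter fun i => wi i = w).card : ℤ) := by
  have key : ∀ s : Finset (Fin n),
      PowerSeries.coeff 0 (∏ i ∈ s, sigFactor (wi i)) = 1 ∧
      (∀ k, 0 < k → k < w → PowerSeries.coeff k (∏ i ∈ s, sigFactor (wi i)) = 0) ∧
      PowerSeries.coeff w (∏ i ∈ s, sigFactor (wi i)) =
        2 * ((s.filter fun i => wi i = w).card : ℤ) := by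
    intro s
    induction s using Finset.cons_induction with
    | empty => refine ⟨by simp, fun k hk0 _ => by simp [PowerSeries.coeff_one, hk0.ne'], by simp [PowerSeries.coeff_one, hw.ne']⟩
    | cons a s ha ih =>
      obtain ⟨ih0, ihlt, ihw⟩ := ih
      rw [Finset.prod_cons]
      have hAlt : ∀ k, 0 < k → k < w → PowerSeries.coeff k (sigFactor (wi a)) = 0 :=
        fun k hk0 hkw => coeff_lt_sigFactor (wi a) k hk0 (hkw.trans_le (hle a))
      have hA0 := coeff_zero_sigFactor (wi a) (hpos a)
      refine ⟨?_, ?_, ?_⟩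
      · simp only [coeff_zero_eq_constantCoeff, map_mul] at *
        rw [hA0, ih0, mul_one]
      · intro k hk0 hkw
        rw [coeff_mul_split _ _ k hk0 (fun j hj0 hjk => hAlt j hj0 (hjk.trans hkw)),
          hA0, one_mul, ihlt k hk0 hkw, hAlt k hk0 hkw, zero_mul, add_zero]
      · rw [coeff_mul_split _ _ w hw hAlt, hA0, one_mul, ihw, ih0, mul_one,
          Finset.filter_cons]
        have hAw : PowerSeries.coeff w (sigFactor (wi a)) =
            if wi a = w then 2 else 0 := by
          split_ifs with h
          · rw [h]; exact coeff_self_sigFactor w hw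
          · exact coeff_lt_sigFactor (wi a) w hw (lt_of_le_of_ne (hle a) (Ne.symm h))
        split_ifs at hAw ⊢ with h
        · rw [hAw, Finset.card_cons]
          push_cast
          ring
        · rw [hAw]
          ring
  exact (key Finset.univ).2.2
end
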